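/- Let n ≥ 1, μ > 0 and v ∈ ℝ^n. Define x* ∈ ℝ^n componentwise by: x*_i = v_i + μ if v_i + μ < 0; x*_i = 0 if v_i ≤ 0 ≤ v_i + μ; and x*_i = v_i if v_i > 0 (equivalently, x*_i = median(v_i + μ, 0, v_i)). Then x* is the unique minimizer over ℝ^n of the function ξ ↦ μ·∑_{i=1}^n max{−ξ_i, 0} + (1/2)·‖ξ − v‖₂². -/

import Mathlib

theorem key8 (μ v t : ℝ) (hμ : 0 < μ) :
    μ * max (-(if v + μ < 0 then v + μ else if 0 < v then v else 0)) 0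
      + (1/2)*((if v + μ < 0 then v + μ else if 0 < v then v else 0) - v)^2
      + (1/2)*(t - (if v + μ < 0 then v + μ else if 0 < v then v else 0))^2
    ≤ μ * max (-t) 0 + (1/2)*(t - v)^2 := by
  have hmax : ∀ a : ℝ, max (-a) 0 = if a ≤ 0 then -a else 0 := by
    intro a; split
    · exact max_eq_left (by linarith)
    · exact max_eq_right (by push_neg at *; linarith)
  rw [hmax, hmax]
  split_ifs with h1 h2 ht ht ht <;> (try push_neg at *) <;> nlinarith [sq_nonneg (t - v), sq_nonneg t]

theorem sum8 (n : ℕ) (μ : ℝ) (hμ : 0 < μ) (v ξ : Fin n → ℝ) :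
    μ * ∑ i, max (-(if v i + μ < 0 then v i + μ else if 0 < v i then v i else 0)) 0
      + (1 / 2) * ∑ i,
          ((if v i + μ < 0 then v i + μ else if 0 < v i then v i else 0) - v i) ^ 2
      + (1 / 2) * ∑ i,
          (ξ i - (if v i + μ < 0 then v i + μ else if 0 < v i then v i else 0)) ^ 2
    ≤ μ * ∑ i, max (-(ξ i)) 0 + (1 / 2) * ∑ i, (ξ i - v i) ^ 2 := by
  have h := Finset.sum_le_sum (fun i (_ : i ∈ Finset.univ) => key8 μ (v i) (ξ i) hμ)
  simpa [Finset.sum_add_distrib, Finset.mul_sum] using h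

/-- Closed form of the proximal operator of `x ↦ μ ‖max{-x, 0}‖₁`:
for `μ > 0` and `v ∈ ℝ^n`, the vector `x*` with `x*_i = v_i + μ` if `v_i + μ < 0`,
`x*_i = v_i` if `v_i > 0`, and `x*_i = 0` otherwise (i.e. if `v_i ≤ 0 ≤ v_i + μ`),
is the unique minimizer of `ξ ↦ μ ∑ i, max{-ξ_i, 0} + (1/2) ‖ξ - v‖₂²`. -/
theorem stmt8 (n : ℕ) (hn : 1 ≤ n) (μ : ℝ) (hμ : 0 < μ) (v : Fin n → ℝ) :
    (∀ ξ : Fin n → ℝ,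
        μ * ∑ i, max (-(if v i + μ < 0 then v i + μ else if 0 < v i then v i else 0)) 0
          + (1 / 2) * ∑ i,
              ((if v i + μ < 0 then v i + μ else if 0 < v i then v i else 0) - v i) ^ 2
        ≤ μ * ∑ i, max (-(ξ i)) 0 + (1 / 2) * ∑ i, (ξ i - v i) ^ 2)
    ∧
    ∀ y : Fin n → ℝ,
      (∀ ξ : Fin n → ℝ,
        μ * ∑ i, max (-(y i)) 0 + (1 / 2) * ∑ i, (y i - v i) ^ 2
          ≤ μ * ∑ i, max (-(ξ i)) 0 + (1 / 2) * ∑ i, (ξ i - v i) ^ 2) →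
      y = fun i => if v i + μ < 0 then v i + μ else if 0 < v i then v i else 0 := by
  constructor
  · intro ξ
    have h := sum8 n μ hμ v ξ
    have hnn : (0:ℝ) ≤ (1 / 2) * ∑ i,
        (ξ i - (if v i + μ < 0 then v i + μ else if 0 < v i then v i else 0)) ^ 2 := by
      positivity
    linarith
  · intro y hy
    set s : Fin n → ℝ := fun i => if v i + μ < 0 then v i + μ else if 0 < v i then v i else 0 with hs
    have h1 := hy s
    have h2 := sum8 n μ hμ v y
    have hzero : ∑ i, (y i - s i) ^ 2 ≤ 0 := by
      simp only [hs] at *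
      linarith
    funext i
    have hterm : (y i - s i) ^ 2 = 0 := by
      have hle : (y i - s i) ^ 2 ≤ ∑ j, (y j - s j) ^ 2 :=
        Finset.single_le_sum (f := fun j => (y j - s j) ^ 2) (fun j _ => sq_nonneg _) (Finset.mem_univ i)
      nlinarith [sq_nonneg (y i - s i)]
    have := pow_eq_zero_iff (n := 2) (by norm_num) |>.mp hterm
    simp only [hs]
    linarith [sub_eq_zero.mp this]
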